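/- Let H ∈ (0,1) and let e_{m,k} denote the Faber–Schauder functions on [0,1]. Let θ_{m,k} ∈ {−1, +1} be arbitrary signs and define the Takagi-class function x(t) = Σ_{m=0}^∞ 2^{m(1/2 − H)} Σ_{k=0}^{2^m − 1} θ_{m,k} e_{m,k}(t), which converges uniformly and defines a continuous function on [0,1]. Then the scaled dyadic quadratic variation sums with exponent γ = 1 − 2H converge: lim_{n→∞} 2^{−n(1−2H)} Σ_{k=0}^{2^n − 1} (x((k+1)/2^n) − x(k/2^n))² = 1 / (2^{2−2H} − 1). -/

import Mathlib

open Filter Topology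

/-- The Faber–Schauder function `e_{m,k}` on `[0,1]`: supported on `[k 2⁻ᵐ, (k+1) 2⁻ᵐ]`,
piecewise linear with slope `2^{m/2}` on the left half of its support and slope `-2^{m/2}`
on the right half, vanishing at the endpoints. -/
noncomputable def faberSchauder (m k : ℕ) (t : ℝ) : ℝ :=
  (2 : ℝ) ^ ((m : ℝ) / 2) * max 0 (min (t - (k : ℝ) / 2 ^ m) (((k : ℝ) + 1) / 2 ^ m - t))

namespace TakagiAux

lemma fs_nonneg (m k : ℕ) (t : ℝ) : 0 ≤ faberSchauder m k t :=
  mul_nonneg (Real.rpow_nonneg (by norm_num) _) (le_max_left 0 _)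

lemma fs_zero_of_le (m j : ℕ) (t : ℝ) (h : t ≤ (j : ℝ) / 2 ^ m) : faberSchauder m j t = 0 := by
  unfold faberSchauder
  rw [mul_eq_zero]; right
  rw [max_eq_left]
  exact le_trans (min_le_left _ _) (by linarith)

lemma fs_zero_of_ge (m j : ℕ) (t : ℝ) (h : ((j : ℝ) + 1) / 2 ^ m ≤ t) : faberSchauder m j t = 0 := by
  unfold faberSchauder
  rw [mul_eq_zero]; right
  rw [max_eq_left]
  exact le_trans (min_le_right _ _) (by linarith)

lemma fs_le (m k : ℕ) (t : ℝ) : faberSchauder m k t ≤ (2:ℝ) ^ ((m:ℝ)/2) * (1 / 2 ^ (m+1)) := by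
  unfold faberSchauder
  apply mul_le_mul_of_nonneg_left _ (Real.rpow_nonneg (by norm_num) _)
  apply max_le (by positivity)
  have h1 := min_le_left (t - (k : ℝ) / 2 ^ m) (((k : ℝ) + 1) / 2 ^ m - t)
  have h2 := min_le_right (t - (k : ℝ) / 2 ^ m) (((k : ℝ) + 1) / 2 ^ m - t)
  have hab : (t - (k : ℝ) / 2 ^ m) + (((k : ℝ) + 1) / 2 ^ m - t) = 1 / 2 ^ m := by ring
  have hp : (1:ℝ) / 2 ^ (m+1) = (1 / 2 ^ m) / 2 := by rw [pow_succ]; ring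
  rw [hp]; linarith

lemma fs_grid (m k i : ℕ) : faberSchauder m k ((i : ℝ) / 2 ^ m) = 0 := by
  rcases le_or_gt i k with h | h
  · apply fs_zero_of_le
    gcongr
  · apply fs_zero_of_ge
    gcongr ?_ / _
    have : (k:ℝ) + 1 ≤ i := by exact_mod_cast h
    linarith

lemma fs_zero_dyadic (m k n i : ℕ) (h : n ≤ m) : faberSchauder m k ((i : ℝ) / 2 ^ n) = 0 := by
  have h2 : (2:ℝ) ^ m = 2 ^ n * 2 ^ (m - n) := by rw [← pow_add]; congr 1; omega
  have hrw : (i : ℝ) / 2 ^ n = ((i * 2 ^ (m - n) : ℕ) : ℝ) / 2 ^ m := by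
    push_cast
    rw [h2]
    have hn : (2:ℝ) ^ n ≠ 0 := by positivity
    have hmn : (2:ℝ) ^ (m - n) ≠ 0 := by positivity
    field_simp
  rw [hrw]
  exact fs_grid m k _

lemma continuous_fs (m k : ℕ) : Continuous (faberSchauder m k) := by
  unfold faberSchauder
  exact continuous_const.mul (continuous_const.max
    (((continuous_id.sub continuous_const).min (continuous_const.sub continuous_id))))

/-- the sign of the level-`m` Schauder slope on the `k`-th dyadic interval of level `n`. -/
noncomputable def dsgn (n m k : ℕ) : ℝ := if Nat.testBit k (n - m - 1) then -1 else 1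

lemma dsgn_sq (n m k : ℕ) : dsgn n m k * dsgn n m k = 1 := by
  unfold dsgn; split <;> norm_num

lemma xor_div (k p q : ℕ) (h : p < q) : (k ^^^ 2 ^ p) / 2 ^ q = k / 2 ^ q := by
  rw [← Nat.shiftRight_eq_div_pow, ← Nat.shiftRight_eq_div_pow]
  apply Nat.eq_of_testBit_eq
  intro i
  simp only [Nat.testBit_shiftRight, Nat.testBit_xor,
    Nat.testBit_two_pow_of_ne (show p ≠ q + i by omega), Bool.xor_false]

lemma xor_lt (k p n : ℕ) (hk : k < 2 ^ n) (hp : p < n) : k ^^^ 2 ^ p < 2 ^ n := by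
  have h2 : 2 ^ p < 2 ^ n := Nat.pow_lt_pow_right one_lt_two hp
  exact Nat.bitwise_lt_two_pow hk h2

lemma dsgn_xor_eq (n m k p : ℕ) (h : p ≠ n - m - 1) : dsgn n m (k ^^^ 2 ^ p) = dsgn n m k := by
  unfold dsgn
  rw [Nat.testBit_xor, Nat.testBit_two_pow_of_ne h, Bool.xor_false]

lemma dsgn_xor_flip (n m k : ℕ) : dsgn n m (k ^^^ 2 ^ (n - m - 1)) = -dsgn n m k := by
  unfold dsgn
  rw [Nat.testBit_xor, Nat.testBit_two_pow_self, Bool.xor_true]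
  cases Nat.testBit k (n - m - 1) <;> norm_num

lemma cross_zero (θ : ℕ → ℕ → ℝ) (n m m' : ℕ) (hm : m < m') (hm' : m' < n) :
    ∑ k ∈ Finset.range (2 ^ n),
      (θ m (k / 2 ^ (n - m)) * dsgn n m k) * (θ m' (k / 2 ^ (n - m')) * dsgn n m' k) = 0 := by
  set p := n - m' - 1 with hp
  apply Finset.sum_involution (g := fun k _ => k ^^^ 2 ^ p)
  · intro k _
    rw [xor_div k p (n - m) (by omega), xor_div k p (n - m') (by omega),
      dsgn_xor_eq n m k p (by omega), hp, dsgn_xor_flip n m' k]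
    ring
  · intro k _ _
    intro heq
    have h1 : (k ^^^ 2 ^ p).testBit p = !k.testBit p := by
      rw [Nat.testBit_xor, Nat.testBit_two_pow_self, Bool.xor_true]
    rw [heq] at h1
    simp at h1
  · intro k _
    exact xor_cancel_right _ _
  · intro k hk
    rw [Finset.mem_range] at *
    exact xor_lt k p n hk (by omega)

lemma fs_increment (m n k : ℕ) (hm : m < n) (hk : k < 2 ^ n) :
    faberSchauder m (k / 2 ^ (n - m)) (((k:ℝ) + 1) / 2 ^ n)
      - faberSchauder m (k / 2 ^ (n - m)) ((k:ℝ) / 2 ^ n)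
      = dsgn n m k * ((2:ℝ) ^ ((m:ℝ) / 2) / 2 ^ n) := by
  set q := n - m with hq
  have hq1 : 1 ≤ q := by omega
  set j := k / 2 ^ q with hj
  set r := k % 2 ^ q with hr
  have hrq : r < 2 ^ q := Nat.mod_lt _ (by positivity)
  have hkd : 2 ^ q * j + r = k := Nat.div_add_mod k (2 ^ q)
  have hnm : n = m + q := by omega
  have h2n : (2:ℝ) ^ n = 2 ^ m * 2 ^ q := by rw [hnm, pow_add]
  have hkR : (k:ℝ) = 2 ^ q * j + r := by exact_mod_cast congrArg (Nat.cast (R := ℝ)) hkd.symm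
  have hA0 : (k:ℝ) / 2 ^ n - (j:ℝ) / 2 ^ m = (r:ℝ) / 2 ^ n := by
    rw [h2n, hkR]; field_simp; ring
  have hB0 : ((j:ℝ) + 1) / 2 ^ m - (k:ℝ) / 2 ^ n = ((2:ℝ) ^ q - r) / 2 ^ n := by
    rw [h2n, hkR]; field_simp; ring
  have hA1 : ((k:ℝ) + 1) / 2 ^ n - (j:ℝ) / 2 ^ m = ((r:ℝ) + 1) / 2 ^ n := by
    rw [h2n, hkR]; field_simp; ring
  have hB1 : ((j:ℝ) + 1) / 2 ^ m - ((k:ℝ) + 1) / 2 ^ n = ((2:ℝ) ^ q - r - 1) / 2 ^ n := by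
    rw [h2n, hkR]; field_simp; ring
  have hqq : 2 ^ q = 2 ^ (q - 1) * 2 := by rw [← pow_succ]; congr 1; omega
  have hbit : Nat.testBit k (q - 1) = decide (2 ^ (q - 1) ≤ r) := by
    have hsplit : k = r + 2 ^ (q - 1) * (2 * j) := by
      rw [← hkd]; rw [hqq]; ring
    rw [Nat.testBit_eq_decide_div_mod_eq, hsplit,
      Nat.add_mul_div_left _ _ (show 0 < 2 ^ (q-1) by positivity)]
    have h2 : (r / 2 ^ (q - 1) + 2 * j) % 2 = r / 2 ^ (q - 1) % 2 := by omega
    rw [h2]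
    have hlt : r / 2 ^ (q - 1) < 2 := by
      apply Nat.div_lt_of_lt_mul; omega
    rcases le_or_gt (2 ^ (q - 1)) r with hb | hb
    · have h1 : 1 ≤ r / 2 ^ (q - 1) := (Nat.one_le_div_iff (by positivity)).2 hb
      have : r / 2 ^ (q - 1) = 1 := by omega
      simp [this, hb]
    · have : r / 2 ^ (q - 1) = 0 := Nat.div_eq_of_lt hb
      simp [this, Nat.not_le.2 hb]
  have hds : dsgn n m k = if 2 ^ (q - 1) ≤ r then (-1:ℝ) else 1 := by
    unfold dsgn
    rw [show n - m - 1 = q - 1 from rfl, hbit]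
    by_cases hc : 2 ^ (q - 1) ≤ r <;> simp [hc]
  unfold faberSchauder
  rw [hA1, hB1, hA0, hB0, hds]
  have hrR : (r:ℝ) < 2 ^ q := by exact_mod_cast hrq
  rcases lt_or_ge r (2 ^ (q - 1)) with hsm | hbg
  · have hnat : 2 * r + 2 ≤ 2 ^ q := by omega
    have hR : 2 * (r:ℝ) + 2 ≤ 2 ^ q := by exact_mod_cast hnat
    rw [if_neg (by omega)]
    rw [min_eq_left (by apply div_le_div_of_nonneg_right ?_ (by positivity); linarith),
      min_eq_left (by apply div_le_div_of_nonneg_right ?_ (by positivity); linarith),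
      max_eq_right (by positivity), max_eq_right (by positivity)]
    ring
  · have hR : 2 ^ q ≤ 2 * (r:ℝ) := by
      have : 2 ^ q ≤ 2 * r := by omega
      exact_mod_cast this
    have hr1 : (r:ℝ) + 1 ≤ 2 ^ q := by
      have : r + 1 ≤ 2 ^ q := hrq
      exact_mod_cast this
    rw [if_pos hbg]
    rw [min_eq_right (by apply div_le_div_of_nonneg_right ?_ (by positivity); linarith),
      min_eq_right (by apply div_le_div_of_nonneg_right ?_ (by positivity); linarith),
      max_eq_right (by apply div_nonneg ?_ (by positivity); linarith),
      max_eq_right (by apply div_nonneg ?_ (by positivity); linarith)]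
    ring

lemma level_increment (θm : ℕ → ℝ) (m n k : ℕ) (hm : m < n) (hk : k < 2 ^ n) :
    ∑ j ∈ Finset.range (2 ^ m),
      θm j * (faberSchauder m j (((k:ℝ) + 1) / 2 ^ n) - faberSchauder m j ((k:ℝ) / 2 ^ n))
    = θm (k / 2 ^ (n - m)) * dsgn n m k * ((2:ℝ) ^ ((m:ℝ) / 2) / 2 ^ n) := by
  have hP : 0 < 2 ^ (n - m) := by positivity
  have h2n : (2:ℝ) ^ n = 2 ^ m * 2 ^ (n - m) := by rw [← pow_add]; congr 1; omega
  have hjmem : k / 2 ^ (n - m) ∈ Finset.range (2 ^ m) := by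
    rw [Finset.mem_range, Nat.div_lt_iff_lt_mul hP]
    calc k < 2 ^ n := hk
    _ = 2 ^ m * 2 ^ (n - m) := by rw [← pow_add]; congr 1; omega
  rw [Finset.sum_eq_single_of_mem _ hjmem]
  · rw [fs_increment m n k hm hk]; ring
  · intro j _ hne
    have hlow : (k / 2 ^ (n - m)) * 2 ^ (n - m) ≤ k := Nat.div_mul_le_self k _
    have hhigh : k < (k / 2 ^ (n - m) + 1) * 2 ^ (n - m) :=
      (Nat.div_lt_iff_lt_mul hP).1 (Nat.lt_succ_self _)
    rcases lt_or_gt_of_ne hne with hlt | hgt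
    · have hnat : (j + 1) * 2 ^ (n - m) ≤ k :=
        le_trans (Nat.mul_le_mul_right _ hlt) hlow
      have hreal : ((j:ℝ) + 1) / 2 ^ m ≤ (k:ℝ) / 2 ^ n := by
        rw [div_le_div_iff₀ (by positivity) (by positivity), h2n]
        have h1 : ((j:ℝ) + 1) * 2 ^ (n - m) ≤ k := by exact_mod_cast hnat
        calc ((j:ℝ) + 1) * (2 ^ m * 2 ^ (n - m)) = (((j:ℝ) + 1) * 2 ^ (n - m)) * 2 ^ m := by ring
        _ ≤ (k:ℝ) * 2 ^ m := by
            apply mul_le_mul_of_nonneg_right h1 (by positivity)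
      rw [fs_zero_of_ge _ _ _ hreal,
        fs_zero_of_ge _ _ _ (le_trans hreal (by apply div_le_div_of_nonneg_right ?_ (by positivity); linarith))]
      ring
    · have hnat : k + 1 ≤ j * 2 ^ (n - m) :=
        le_trans hhigh (Nat.mul_le_mul_right _ hgt)
      have hreal : ((k:ℝ) + 1) / 2 ^ n ≤ (j:ℝ) / 2 ^ m := by
        rw [div_le_div_iff₀ (by positivity) (by positivity), h2n]
        have h1 : (k:ℝ) + 1 ≤ (j:ℝ) * 2 ^ (n - m) := by exact_mod_cast hnat
        calc ((k:ℝ) + 1) * 2 ^ m ≤ ((j:ℝ) * 2 ^ (n - m)) * 2 ^ m := by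
              apply mul_le_mul_of_nonneg_right h1 (by positivity)
        _ = (j:ℝ) * (2 ^ m * 2 ^ (n - m)) := by ring
      rw [fs_zero_of_le _ _ _ hreal,
        fs_zero_of_le _ _ _ (le_trans (by apply div_le_div_of_nonneg_right ?_ (by positivity); linarith) hreal)]
      ring

lemma sum_fs_le (m : ℕ) (t : ℝ) :
    ∑ k ∈ Finset.range (2 ^ m), faberSchauder m k t ≤ (2:ℝ) ^ ((m:ℝ)/2) * (1 / 2 ^ (m+1)) := by
  classical
  set B := (2:ℝ) ^ ((m:ℝ)/2) * (1 / 2 ^ (m+1)) with hB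
  have hB0 : 0 ≤ B := by positivity
  set s := (Finset.range (2 ^ m)).filter (fun k => faberSchauder m k t ≠ 0) with hs
  have hsum : ∑ k ∈ Finset.range (2 ^ m), faberSchauder m k t
      = ∑ k ∈ s, faberSchauder m k t := (Finset.sum_filter_ne_zero _).symm
  have key : ∀ c : ℕ, faberSchauder m c t ≠ 0 → (c:ℝ)/2^m < t ∧ t < ((c:ℝ)+1)/2^m := by
    intro c hc
    constructor
    · by_contra h; exact hc (fs_zero_of_le _ _ _ (not_lt.1 h))
    · by_contra h; exact hc (fs_zero_of_ge _ _ _ (not_lt.1 h))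
  have hcard : s.card ≤ 1 := by
    rw [Finset.card_le_one]
    intro a ha b hb
    simp only [hs, Finset.mem_filter, Finset.mem_range] at ha hb
    obtain ⟨ha1, ha2⟩ := key a ha.2
    obtain ⟨hb1, hb2⟩ := key b hb.2
    by_contra hne
    rcases Nat.lt_or_ge a b with h | h
    · have h1 : (a:ℝ) + 1 ≤ b := by exact_mod_cast h
      have h2 : ((a:ℝ)+1)/2^m ≤ (b:ℝ)/2^m := by gcongr
      linarith
    · have h' : b < a := by omega
      have h1 : (b:ℝ) + 1 ≤ a := by exact_mod_cast h'
      have h2 : ((b:ℝ)+1)/2^m ≤ (a:ℝ)/2^m := by gcongr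
      linarith
  calc ∑ k ∈ Finset.range (2 ^ m), faberSchauder m k t
      = ∑ k ∈ s, faberSchauder m k t := hsum
  _ ≤ s.card • B := Finset.sum_le_card_nsmul s _ B (fun x _ => fs_le m x t)
  _ = (s.card : ℝ) * B := nsmul_eq_mul _ _
  _ ≤ 1 * B := by
      apply mul_le_mul_of_nonneg_right _ hB0
      exact_mod_cast hcard
  _ = B := one_mul B

end TakagiAux

namespace TakagiAux

noncomputable def gblock (H : ℝ) (θ : ℕ → ℕ → ℝ) (m : ℕ) (t : ℝ) : ℝ :=
  (2:ℝ) ^ ((m:ℝ) * (1/2 - H)) * ∑ k ∈ Finset.range (2 ^ m), θ m k * faberSchauder m k t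

end TakagiAux

open TakagiAux


/-- For `H ∈ (0,1)` and arbitrary signs `θ_{m,k} ∈ {−1,+1}`, the Takagi-class
series `x(t) = Σ_m 2^{m(1/2−H)} Σ_k θ_{m,k} e_{m,k}(t)` converges uniformly on `[0,1]` to a
continuous function, and the scaled dyadic quadratic variation sums with exponent `γ = 1−2H`
converge: `2^{−n(1−2H)} Σ_{k<2^n} (x((k+1)/2^n) − x(k/2^n))² → 1/(2^{2−2H} − 1)`. -/
theorem takagi_class_scaled_qv
    (H : ℝ) (hH : H ∈ Set.Ioo (0 : ℝ) 1)
    (θ : ℕ → ℕ → ℝ) (hθ : ∀ m k : ℕ, θ m k = 1 ∨ θ m k = -1) :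
    ∃ x : ℝ → ℝ,
      TendstoUniformlyOn
        (fun M t => ∑ m ∈ Finset.range M, (2 : ℝ) ^ ((m : ℝ) * (1 / 2 - H)) *
          ∑ k ∈ Finset.range (2 ^ m), θ m k * faberSchauder m k t)
        x atTop (Set.Icc 0 1)
      ∧ ContinuousOn x (Set.Icc 0 1)
      ∧ Tendsto
          (fun n : ℕ => (2 : ℝ) ^ (-(n : ℝ) * (1 - 2 * H)) *
            ∑ k ∈ Finset.range (2 ^ n),
              (x (((k : ℝ) + 1) / 2 ^ n) - x ((k : ℝ) / 2 ^ n)) ^ 2)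
          atTop (𝓝 (1 / ((2 : ℝ) ^ (2 - 2 * H) - 1))) := by
  classical
  obtain ⟨hH0, hH1⟩ := hH
  have hθ1 : ∀ m k, |θ m k| = 1 := by intro m k; rcases hθ m k with h | h <;> simp [h]
  have hθsq : ∀ m k, θ m k * θ m k = 1 := by
    intro m k; rcases hθ m k with h | h <;> simp [h]
  set u : ℕ → ℝ := fun m => (2:ℝ) ^ ((m:ℝ) * (1/2 - H)) * ((2:ℝ)^((m:ℝ)/2) * (1/2^(m+1)))
    with hu_def
  have hrpadd : ∀ a b : ℝ, (2:ℝ)^a * (2:ℝ)^b = (2:ℝ)^(a+b) :=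
    fun a b => (Real.rpow_add two_pos a b).symm
  have hu_eq : ∀ m : ℕ, u m = (1/2) * ((2:ℝ) ^ (-H)) ^ m := by
    intro m
    have e1 : ((2:ℝ) ^ (-H)) ^ m = (2:ℝ) ^ (-H * (m:ℝ)) := by
      rw [← Real.rpow_natCast ((2:ℝ) ^ (-H)) m, ← Real.rpow_mul (by norm_num)]
    have e2 : (1:ℝ)/(2:ℝ)^(m+1) = (2:ℝ) ^ (-((m:ℝ)+1)) := by
      rw [one_div, ← Real.rpow_natCast (2:ℝ) (m+1), ← Real.rpow_neg (by norm_num)]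
      congr 1
      push_cast; ring
    have e3 : (1:ℝ)/2 = (2:ℝ) ^ (-1 : ℝ) := by
      rw [Real.rpow_neg_one]; norm_num
    show (2:ℝ) ^ ((m:ℝ) * (1/2 - H)) * ((2:ℝ)^((m:ℝ)/2) * (1/2^(m+1))) = _
    rw [e1, e2, e3, hrpadd, hrpadd, hrpadd]
    congr 1; ring
  have hlt : (2:ℝ)^(-H) < 1 :=
    Real.rpow_lt_one_of_one_lt_of_neg one_lt_two (by linarith)
  have hu_sum : Summable u :=
    (((summable_geometric_of_lt_one (Real.rpow_pos_of_pos two_pos _).le hlt).mul_left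
      (1/2)).congr (fun m => (hu_eq m).symm))
  have hgu : ∀ (m : ℕ) (t : ℝ), ‖gblock H θ m t‖ ≤ u m := by
    intro m t
    rw [Real.norm_eq_abs, gblock, abs_mul,
      abs_of_nonneg (Real.rpow_nonneg (by norm_num) _), hu_def]
    apply mul_le_mul_of_nonneg_left _ (Real.rpow_nonneg (by norm_num) _)
    calc |∑ k ∈ Finset.range (2^m), θ m k * faberSchauder m k t|
        ≤ ∑ k ∈ Finset.range (2^m), |θ m k * faberSchauder m k t| :=
          Finset.abs_sum_le_sum_abs _ _
    _ = ∑ k ∈ Finset.range (2^m), faberSchauder m k t := by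
        apply Finset.sum_congr rfl; intro k _
        rw [abs_mul, hθ1, one_mul, abs_of_nonneg (fs_nonneg m k t)]
    _ ≤ (2:ℝ)^((m:ℝ)/2) * (1/2^(m+1)) := sum_fs_le m t
  have hsummable : ∀ t : ℝ, Summable (fun m => gblock H θ m t) := fun t =>
    Summable.of_norm_bounded hu_sum (fun m => hgu m t)
  set x : ℝ → ℝ := fun t => ∑' m, gblock H θ m t with hx
  have hTU : TendstoUniformlyOn (fun M t => ∑ m ∈ Finset.range M, gblock H θ m t) x
      atTop (Set.Icc 0 1) := tendstoUniformlyOn_tsum_nat hu_sum (fun m t _ => hgu m t)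
  refine ⟨x, hTU, ?_, ?_⟩
  · apply hTU.continuousOn
    refine Frequently.of_forall (fun N => ?_)
    apply Continuous.continuousOn
    apply continuous_finset_sum
    intro m _
    exact continuous_const.mul
      (continuous_finset_sum _ fun k _ => continuous_const.mul (continuous_fs m k))
  -- the quadratic variation limit
  have hinc : ∀ n k : ℕ, k < 2 ^ n →
      x (((k:ℝ)+1)/2^n) - x ((k:ℝ)/2^n)
      = ∑ m ∈ Finset.range n,
          (θ m (k / 2^(n-m)) * dsgn n m k) * ((2:ℝ)^((m:ℝ)*(1-H)) / 2^n) := by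
    intro n k hk
    rw [hx]
    simp only []
    rw [← Summable.tsum_sub (hsummable _) (hsummable _)]
    rw [tsum_eq_sum (s := Finset.range n) ?side]
    case side =>
      intro m hm
      rw [Finset.mem_range, not_lt] at hm
      have h0 : gblock H θ m ((k:ℝ)/2^n) = 0 := by
        rw [gblock]
        convert mul_zero _ using 2
        apply Finset.sum_eq_zero
        intro j _
        rw [fs_zero_dyadic m j n k hm, mul_zero]
      have h1 : gblock H θ m (((k:ℝ)+1)/2^n) = 0 := by
        rw [gblock]
        convert mul_zero _ using 2
        apply Finset.sum_eq_zero
        intro j _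
        have : ((k:ℝ)+1) = ((k+1 : ℕ):ℝ) := by push_cast; ring
        rw [this, fs_zero_dyadic m j n (k+1) hm, mul_zero]
      rw [h0, h1, sub_zero]
    apply Finset.sum_congr rfl
    intro m hm
    rw [Finset.mem_range] at hm
    have hd : gblock H θ m (((k:ℝ)+1)/2^n) - gblock H θ m ((k:ℝ)/2^n)
        = (2:ℝ)^((m:ℝ)*(1/2-H)) * ∑ j ∈ Finset.range (2^m),
            θ m j * (faberSchauder m j (((k:ℝ)+1)/2^n) - faberSchauder m j ((k:ℝ)/2^n)) := by
      rw [gblock, gblock, ← mul_sub, ← Finset.sum_sub_distrib]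
      congr 1
      apply Finset.sum_congr rfl; intro j _; ring
    rw [hd, level_increment (θ m) m n k hm hk]
    have hexp : (2:ℝ)^((m:ℝ)*(1/2-H)) * (2:ℝ)^((m:ℝ)/2) = (2:ℝ)^((m:ℝ)*(1-H)) := by
      rw [hrpadd]; congr 1; ring
    rw [show (2:ℝ)^((m:ℝ)*(1/2-H)) * (θ m (k/2^(n-m)) * dsgn n m k * ((2:ℝ)^((m:ℝ)/2)/2^n))
        = θ m (k/2^(n-m)) * dsgn n m k *
          ((2:ℝ)^((m:ℝ)*(1/2-H)) * (2:ℝ)^((m:ℝ)/2)/2^n) from by ring, hexp]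
  have hkey : ∀ n : ℕ, ∀ m ∈ Finset.range n, ∀ m' ∈ Finset.range n,
      ∑ k ∈ Finset.range (2^n),
        (θ m (k/2^(n-m)) * dsgn n m k) * (θ m' (k/2^(n-m')) * dsgn n m' k)
      = if m = m' then ((2^n : ℕ) : ℝ) else 0 := by
    intro n m hm m' hm'
    rw [Finset.mem_range] at hm hm'
    rcases lt_trichotomy m m' with h | h | h
    · rw [if_neg h.ne]; exact cross_zero θ n m m' h hm'
    · subst h; rw [if_pos rfl]
      have hone : ∀ k ∈ Finset.range (2^n),
          (θ m (k/2^(n-m)) * dsgn n m k) * (θ m (k/2^(n-m)) * dsgn n m k) = 1 := by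
        intro k _
        rw [show (θ m (k/2^(n-m)) * dsgn n m k) * (θ m (k/2^(n-m)) * dsgn n m k)
            = (θ m (k/2^(n-m)) * θ m (k/2^(n-m))) * (dsgn n m k * dsgn n m k) from by ring,
          hθsq, dsgn_sq, one_mul]
      rw [Finset.sum_congr rfl hone]
      simp
    · rw [if_neg (Ne.symm h.ne)]
      rw [Finset.sum_congr rfl (fun k _ => mul_comm _ _)]
      exact cross_zero θ n m' m h hm
  set r : ℝ := (2:ℝ) ^ (-(2 - 2*H)) with hrdef
  have hr0 : 0 ≤ r := (Real.rpow_pos_of_pos two_pos _).le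
  have hr1 : r < 1 := Real.rpow_lt_one_of_one_lt_of_neg one_lt_two (by linarith)
  have hFeq : ∀ n : ℕ,
      (2:ℝ)^(-(n:ℝ)*(1-2*H)) * ∑ k ∈ Finset.range (2^n),
        (x (((k:ℝ)+1)/2^n) - x ((k:ℝ)/2^n))^2
      = ∑ i ∈ Finset.range n, r^(i+1) := by
    intro n
    have h1 : ∑ k ∈ Finset.range (2^n), (x (((k:ℝ)+1)/2^n) - x ((k:ℝ)/2^n))^2
        = ∑ k ∈ Finset.range (2^n), (∑ m ∈ Finset.range n,
            (θ m (k/2^(n-m)) * dsgn n m k) * ((2:ℝ)^((m:ℝ)*(1-H))/2^n))^2 := by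
      apply Finset.sum_congr rfl; intro k hk; rw [Finset.mem_range] at hk
      rw [hinc n k hk]
    have h2 : ∀ k : ℕ, (∑ m ∈ Finset.range n,
          (θ m (k/2^(n-m)) * dsgn n m k) * ((2:ℝ)^((m:ℝ)*(1-H))/2^n))^2
        = ∑ m ∈ Finset.range n, ∑ m' ∈ Finset.range n,
            ((θ m (k/2^(n-m)) * dsgn n m k) * (θ m' (k/2^(n-m')) * dsgn n m' k)) *
              (((2:ℝ)^((m:ℝ)*(1-H))/2^n) * ((2:ℝ)^((m':ℝ)*(1-H))/2^n)) := by
      intro k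
      rw [sq, Finset.sum_mul_sum]
      apply Finset.sum_congr rfl; intro m _
      apply Finset.sum_congr rfl; intro m' _
      ring
    have h3 : ∑ k ∈ Finset.range (2^n), (x (((k:ℝ)+1)/2^n) - x ((k:ℝ)/2^n))^2
        = ∑ m ∈ Finset.range n, ((2^n : ℕ) : ℝ) *
            (((2:ℝ)^((m:ℝ)*(1-H))/2^n) * ((2:ℝ)^((m:ℝ)*(1-H))/2^n)) := by
      rw [h1, Finset.sum_congr rfl (fun k _ => h2 k), Finset.sum_comm]
      apply Finset.sum_congr rfl
      intro m hm
      rw [Finset.sum_comm]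
      have h4 : ∀ m' ∈ Finset.range n,
          ∑ k ∈ Finset.range (2^n),
            ((θ m (k/2^(n-m)) * dsgn n m k) * (θ m' (k/2^(n-m')) * dsgn n m' k)) *
              (((2:ℝ)^((m:ℝ)*(1-H))/2^n) * ((2:ℝ)^((m':ℝ)*(1-H))/2^n))
          = (if m = m' then ((2^n : ℕ) : ℝ) else 0) *
              (((2:ℝ)^((m:ℝ)*(1-H))/2^n) * ((2:ℝ)^((m':ℝ)*(1-H))/2^n)) := by
        intro m' hm'
        rw [← Finset.sum_mul, hkey n m hm m' hm']
      rw [Finset.sum_congr rfl h4]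
      rw [Finset.sum_eq_single_of_mem m hm]
      · rw [if_pos rfl]
      · intro m' _ hne
        rw [if_neg (Ne.symm hne), zero_mul]
    rw [h3, Finset.mul_sum]
    have hterm : ∀ m ∈ Finset.range n,
        (2:ℝ)^(-(n:ℝ)*(1-2*H)) * (((2^n : ℕ) : ℝ) *
          (((2:ℝ)^((m:ℝ)*(1-H))/2^n) * ((2:ℝ)^((m:ℝ)*(1-H))/2^n)))
        = r ^ (n - m) := by
      intro m hm
      rw [Finset.mem_range] at hm
      have hnn : ((2^n : ℕ) : ℝ) = (2:ℝ)^((n:ℝ)) := by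
        push_cast
        exact (Real.rpow_natCast 2 n).symm
      have hnn2 : ((2:ℝ))^(n : ℕ) = (2:ℝ)^((n:ℝ)) := (Real.rpow_natCast 2 n).symm
      rw [hrdef, ← Real.rpow_natCast ((2:ℝ)^(-(2-2*H))) (n-m),
        ← Real.rpow_mul (by norm_num), Nat.cast_sub hm.le]
      rw [hnn, hnn2, div_eq_mul_inv, ← Real.rpow_neg (by norm_num)]
      rw [hrpadd, hrpadd, hrpadd, hrpadd]
      congr 1; ring
    rw [Finset.sum_congr rfl hterm, ← Finset.sum_range_reflect]
    apply Finset.sum_congr rfl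
    intro j hj
    rw [Finset.mem_range] at hj
    congr 1
    omega
  -- geometric series limit
  have hfe : (fun i : ℕ => r * r^i) = fun i => r^(i+1) := by
    funext i; rw [pow_succ]; ring
  have hgeom : HasSum (fun i : ℕ => r^(i+1)) (r * (1-r)⁻¹) :=
    hfe ▸ (hasSum_geometric_of_lt_one hr0 hr1).mul_left r
  have hA : (1:ℝ) < (2:ℝ)^(2-2*H) :=
    (Real.one_lt_rpow_iff_of_pos two_pos).2 (Or.inl ⟨one_lt_two, by linarith⟩)
  have hval : r * (1-r)⁻¹ = 1 / ((2:ℝ)^(2-2*H) - 1) := by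
    have hrA : r = ((2:ℝ)^(2-2*H))⁻¹ := by
      rw [hrdef, Real.rpow_neg (by norm_num)]
    rw [hrA]
    have hA0 : (2:ℝ)^(2-2*H) ≠ 0 := by positivity
    have hA1 : (2:ℝ)^(2-2*H) - 1 ≠ 0 := by
      intro hc; rw [sub_eq_zero] at hc; rw [hc] at hA; exact lt_irrefl _ hA
    field_simp
  have := hgeom.tendsto_sum_nat
  rw [hval] at this
  exact this.congr (fun n => (hFeq n).symm)
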